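/- Let S be a semigroup admitting a left-identity element e (e·t = t for all t ∈ S), A a finite set, and X ⊆ A^S a subshift of finite type. Then the dynamical system (X,S) has the pseudo-orbit tracing property. -/

import Mathlib

open Filter Set Topology Uniformity

/-- Let `S` be a semigroup with a left-identity element `e`, `A` a finite set, and
`X ⊆ A^S` a subshift of finite type. Then `(X,S)` has the pseudo-orbit tracing
property. -/
theorem stmt_9 {S A : Type*} [Semigroup S] [Finite A] [UniformSpace A] [DiscreteTopology A]
    (e : S) (he : ∀ t : S, e * t = t)
    (X : Set (S → A)) (hXc : IsClosed X)
    (hinv : ∀ (s : S) (x : S → A), x ∈ X → (fun t => x (t * s)) ∈ X)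
    (W : Finset S) (P : Set (∀ _ : (W : Set S), A))
    (hsft : X = {x : S → A | ∀ s : S, (fun w : (W : Set S) => x (w.1 * s)) ∈ P}) :
    ∀ U ∈ uniformity {x // x ∈ X}, ∃ K : Finset S, ∃ V ∈ uniformity {x // x ∈ X},
      ∀ xs : S → {x // x ∈ X},
        (∀ k ∈ K, ∀ s : S,
          ((⟨fun u => (xs s).1 (u * k), hinv k _ (xs s).2⟩ : {x // x ∈ X}), xs (k * s)) ∈ V) →
        ∃ x : {x // x ∈ X}, ∀ s : S,
          ((⟨fun u => x.1 (u * s), hinv s _ x.2⟩ : {x // x ∈ X}), xs s) ∈ U := by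
  classical
  -- the uniformity on A is discrete
  have hid : SetRel.id ∈ 𝓤 A := by
    rw [compactSpace_uniformity]
    refine mem_iSup.2 fun x => ?_
    rw [nhds_prod_eq, nhds_discrete, Filter.prod_pure_pure]
    exact mem_pure.2 rfl
  have hA : 𝓤 A = 𝓟 (SetRel.id : Set (A × A)) := by
    refine le_antisymm (le_principal_iff.2 hid) (Filter.le_def.2 fun U hU => ?_)
    refine mem_principal.2 ?_
    rintro ⟨a, b⟩ hp
    have h : a = b := hp
    subst h
    exact refl_mem_uniformity hU
  -- basic entourages of the product
  have hbasic : ∀ G : Finset S,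
      {p : (S → A) × (S → A) | ∀ g ∈ G, p.1 g = p.2 g} ∈ 𝓤 (S → A) := by
    intro G
    have heq : {p : (S → A) × (S → A) | ∀ g ∈ G, p.1 g = p.2 g}
        = ⋂ g ∈ G, {p : (S → A) × (S → A) | p.1 g = p.2 g} := by
      ext p; simp
    rw [heq]
    refine (Filter.biInter_finset_mem G).2 fun g _ => ?_
    rw [Pi.uniformity]
    refine mem_iInf_of_mem g ?_
    have : ((fun a : (S → A) × (S → A) => (a.1 g, a.2 g)) ⁻¹' SetRel.id)
        ∈ comap (fun a : (S → A) × (S → A) => (a.1 g, a.2 g)) (𝓤 A) :=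
      preimage_mem_comap hid
    exact this
  -- every entourage of the product contains a basic one
  have hdec : ∀ T ∈ 𝓤 (S → A), ∃ F : Finset S,
      ∀ p : (S → A) × (S → A), (∀ f ∈ F, p.1 f = p.2 f) → p ∈ T := by
    intro T hT
    rw [Pi.uniformity] at hT
    rw [Filter.mem_iInf] at hT
    obtain ⟨I, hIfin, V, hV, hTeq⟩ := hT
    refine ⟨hIfin.toFinset, fun p hp => ?_⟩
    rw [hTeq]
    refine mem_iInter.2 fun i => ?_
    have hVi := hV i
    rw [hA, Filter.comap_principal, mem_principal] at hVi
    exact hVi (show p.1 (i : S) = p.2 (i : S) from hp i (hIfin.mem_toFinset.2 i.2))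
  intro U hU
  rw [uniformity_subtype] at hU
  obtain ⟨T, hT, hTU⟩ := Filter.mem_comap.1 hU
  obtain ⟨F, hF⟩ := hdec T hT
  set G : Finset S := W ∪ {e} with hG
  refine ⟨F ∪ W ∪ {e},
    (fun q : {x // x ∈ X} × {x // x ∈ X} => (q.1.1, q.2.1)) ⁻¹'
      {p : (S → A) × (S → A) | ∀ g ∈ G, p.1 g = p.2 g}, ?_, ?_⟩
  · rw [uniformity_subtype]; exact preimage_mem_comap (hbasic G)
  intro xs hxs
  have hxs' : ∀ k ∈ F ∪ W ∪ {e}, ∀ s : S, ∀ g ∈ G,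
      (xs s).1 (g * k) = (xs (k * s)).1 g := fun k hk s g hg => hxs k hk s g hg
  have heG : e ∈ G := Finset.mem_union_right _ (Finset.mem_singleton_self e)
  have hWG : ∀ w ∈ W, w ∈ G := fun w hw => Finset.mem_union_left _ hw
  have hWK : ∀ w ∈ W, w ∈ F ∪ W ∪ {e} := fun w hw => by
    simp [Finset.mem_union, hw]
  have heK : e ∈ F ∪ W ∪ {e} := by simp
  have hFK : ∀ f ∈ F, f ∈ F ∪ W ∪ {e} := fun f hf => by
    simp [Finset.mem_union, hf]
  set x : S → A := fun t => (xs t).1 e with hxdef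
  have h1 : ∀ s : S, ∀ w ∈ W, x (w * s) = (xs s).1 w := by
    intro s w hw
    have h := hxs' w (hWK w hw) s e heG
    rw [he w] at h
    exact h.symm
  have h2 : ∀ s : S, ∀ w ∈ W, (xs s).1 (w * e) = (xs s).1 w := by
    intro s w hw
    have h := hxs' e heK s w (hWG w hw)
    rwa [he s] at h
  have hxX : x ∈ X := by
    have hkey : ∀ s : S, (fun w : (W : Set S) => x (w.1 * s)) ∈ P := by
      intro s
      have hP := hsft.subset (xs s).2 e
      have heq : (fun w : (W : Set S) => x (w.1 * s))
          = fun w : (W : Set S) => (xs s).1 (w.1 * e) := by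
        funext w
        rw [h1 s w.1 (Finset.mem_coe.1 w.2), ← h2 s w.1 (Finset.mem_coe.1 w.2)]
      rw [heq]
      exact hP
    exact hsft.symm.subset hkey
  refine ⟨⟨x, hxX⟩, fun s => ?_⟩
  apply hTU
  refine hF _ fun f hf => ?_
  have h := hxs' f (hFK f hf) s e heG
  rw [he f] at h
  exact h.symm
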